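/- For every fixed σ > 0 and γ > 0, the function μ ↦ R(μ) = (1/π)∫₀^π 1(E_{μ,σ}(θ) ≤ γ) dθ is continuous on the open interval (0, ∞). -/

import Mathlib

open Classical MeasureTheory ProbabilityTheory

/-- `Φ`, the standard Gaussian cumulative distribution function. -/
noncomputable def Phi (x : ℝ) : ℝ := ((gaussianReal 0 1) (Set.Iic x)).toReal

/-- `E_{μ,σ}(θ)`: reducible error of the affine classifier `sign(sin(θ)x + cos(θ))` for the
antipodal equal-prior mixture of `N(−μ, σ²)` and `N(μ, σ²)`. -/
noncomputable def redErr (μ σ θ : ℝ) : ℝ :=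
  Phi (μ / σ) - (1 / 2) * Phi ((μ * Real.sin θ - Real.cos θ) / (σ * Real.sin θ))
    - (1 / 2) * Phi ((μ * Real.sin θ + Real.cos θ) / (σ * Real.sin θ))

/-- `R(μ) = (1/π) ∫₀^π 1(E_{μ,σ}(θ) ≤ γ) dθ`, the Rashomon ratio. -/
noncomputable def rashRatio (σ γ μ : ℝ) : ℝ :=
  (1 / Real.pi) * ∫ θ in (0 : ℝ)..Real.pi, (if redErr μ σ θ ≤ γ then (1 : ℝ) else 0)

/- ### Auxiliary lemmas -/

lemma pdf_cont : Continuous (gaussianPDFReal 0 1) := by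
  unfold gaussianPDFReal
  fun_prop

lemma Phi_eq (x : ℝ) : Phi x = ∫ t in Set.Iic x, gaussianPDFReal 0 1 t := by
  rw [Phi, gaussianReal_apply_eq_integral 0 one_ne_zero, ENNReal.toReal_ofReal]
  exact setIntegral_nonneg measurableSet_Iic fun t _ => gaussianPDFReal_nonneg _ _ _

lemma Phi_sub (a b : ℝ) : Phi b - Phi a = ∫ t in a..b, gaussianPDFReal 0 1 t := by
  rw [Phi_eq, Phi_eq]
  exact intervalIntegral.integral_Iic_sub_Iic (integrable_gaussianPDFReal 0 1).integrableOn
    (integrable_gaussianPDFReal 0 1).integrableOn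

lemma Phi_cont : Continuous Phi := by
  have h := (integrable_gaussianPDFReal 0 1).continuous_primitive 0
  have he : Phi = fun x => Phi 0 + ∫ t in (0:ℝ)..x, gaussianPDFReal 0 1 t := by
    funext x
    rw [← Phi_sub]
    ring
  rw [he]
  exact continuous_const.add h

lemma pdf_lt_pdf {x y : ℝ} (h : y ^ 2 < x ^ 2) :
    gaussianPDFReal 0 1 x < gaussianPDFReal 0 1 y := by
  simp only [gaussianPDFReal, NNReal.coe_one, mul_one, sub_zero]
  have hc : (0:ℝ) < (Real.sqrt (2 * Real.pi))⁻¹ := by positivity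
  exact mul_lt_mul_of_pos_left (Real.exp_lt_exp.2 (by linarith)) hc

/-- For `μ > 0`, the map `t ↦ Φ((μ-t)/σ) + Φ((μ+t)/σ)` is strictly decreasing on `[0, ∞)`. -/
lemma sum_strictAntiOn (μ σ : ℝ) (hμ : 0 < μ) (hσ : 0 < σ) :
    StrictAntiOn (fun t => Phi ((μ - t) / σ) + Phi ((μ + t) / σ)) (Set.Ici (0:ℝ)) := by
  intro t1 h1 t2 _ hlt
  simp only [Set.mem_Ici] at h1
  have hd : (μ - t2) / σ < (μ - t1) / σ := by
    rw [div_lt_div_iff₀ hσ hσ]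
    nlinarith [mul_pos (sub_pos.2 hlt) hσ]
  have hintL : IntervalIntegrable (fun u => gaussianPDFReal 0 1 (2 * μ / σ - u))
      volume ((μ - t2) / σ) ((μ - t1) / σ) :=
    (pdf_cont.comp (continuous_const.sub continuous_id)).intervalIntegrable _ _
  have hintR : IntervalIntegrable (gaussianPDFReal 0 1)
      volume ((μ - t2) / σ) ((μ - t1) / σ) :=
    (integrable_gaussianPDFReal 0 1).intervalIntegrable
  have key : (0:ℝ) < ∫ u in ((μ - t2) / σ)..((μ - t1) / σ),
      (gaussianPDFReal 0 1 u - gaussianPDFReal 0 1 (2 * μ / σ - u)) := by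
    refine intervalIntegral.intervalIntegral_pos_of_pos_on (hintR.sub hintL) (fun u hu => ?_) hd
    have hum : u < μ / σ := by
      refine lt_of_lt_of_le hu.2 ?_
      rw [div_le_div_iff₀ hσ hσ]
      nlinarith [mul_nonneg h1 hσ.le]
    have hsq : u ^ 2 < (2 * μ / σ - u) ^ 2 := by
      have hm : 0 < (μ / σ) * (μ / σ - u) := mul_pos (div_pos hμ hσ) (sub_pos.2 hum)
      have key2 : (2 * μ / σ - u) ^ 2 - u ^ 2 = 4 * ((μ / σ) * (μ / σ - u)) := by ring
      linarith
    linarith [pdf_lt_pdf hsq]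
  rw [intervalIntegral.integral_sub hintR hintL] at key
  have hL : (∫ u in ((μ - t2) / σ)..((μ - t1) / σ), gaussianPDFReal 0 1 (2 * μ / σ - u))
      = Phi ((μ + t2) / σ) - Phi ((μ + t1) / σ) := by
    rw [intervalIntegral.integral_comp_sub_left (gaussianPDFReal 0 1) (2 * μ / σ)]
    have e1 : 2 * μ / σ - (μ - t1) / σ = (μ + t1) / σ := by ring
    have e2 : 2 * μ / σ - (μ - t2) / σ = (μ + t2) / σ := by ring
    rw [e1, e2, ← Phi_sub]
  have hR : (∫ u in ((μ - t2) / σ)..((μ - t1) / σ), gaussianPDFReal 0 1 u)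
      = Phi ((μ - t1) / σ) - Phi ((μ - t2) / σ) := (Phi_sub _ _).symm
  rw [hL, hR] at key
  simp only
  linarith

lemma redErr_eq_cot (μ σ θ : ℝ) (hσ : 0 < σ) (h0 : 0 < θ) (hπ : θ < Real.pi) :
    redErr μ σ θ = Phi (μ / σ) - (1 / 2) * Phi ((μ - Real.cot θ) / σ)
      - (1 / 2) * Phi ((μ + Real.cot θ) / σ) := by
  have hs : 0 < Real.sin θ := Real.sin_pos_of_pos_of_lt_pi h0 hπ
  rw [redErr, Real.cot_eq_cos_div_sin]
  have e1 : (μ * Real.sin θ - Real.cos θ) / (σ * Real.sin θ)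
      = (μ - Real.cos θ / Real.sin θ) / σ := by
    field_simp
  have e2 : (μ * Real.sin θ + Real.cos θ) / (σ * Real.sin θ)
      = (μ + Real.cos θ / Real.sin θ) / σ := by
    field_simp
  rw [e1, e2]

lemma cot_injOn : Set.InjOn Real.cot (Set.Ioo 0 Real.pi) := by
  intro a ha b hb hab
  have hsa : 0 < Real.sin a := Real.sin_pos_of_pos_of_lt_pi ha.1 ha.2
  have hsb : 0 < Real.sin b := Real.sin_pos_of_pos_of_lt_pi hb.1 hb.2
  rw [Real.cot_eq_cos_div_sin, Real.cot_eq_cos_div_sin,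
    div_eq_div_iff hsa.ne' hsb.ne'] at hab
  have hz : Real.sin (a - b) = 0 := by
    rw [Real.sin_sub]
    linear_combination -hab
  have h1 : -Real.pi < a - b := by linarith [ha.1, hb.2]
  have h2 : a - b < Real.pi := by linarith [ha.2, hb.1]
  have := (Real.sin_eq_zero_iff_of_lt_of_lt h1 h2).1 hz
  linarith

/-- For fixed `σ > 0` and `γ > 0`, the Rashomon ratio `μ ↦ R(μ)` is
continuous on `(0, ∞)`. -/
theorem rashRatio_continuousOn
    (σ γ : ℝ) (hσ : 0 < σ) (hγ : 0 < γ) :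
    ContinuousOn (fun μ => rashRatio σ γ μ) (Set.Ioi (0 : ℝ)) := by
  have hpi := Real.pi_pos
  intro μ₀ hμ₀
  apply ContinuousAt.continuousWithinAt
  have hμ0 : (0:ℝ) < μ₀ := hμ₀
  -- continuity of `redErr` in `μ` for fixed `θ`
  have hcontμ : ∀ θ : ℝ, Continuous (fun μ => redErr μ σ θ) := by
    intro θ
    unfold redErr
    refine ((Phi_cont.comp (continuous_id.div_const σ)).sub
      (continuous_const.mul (Phi_cont.comp ?_))).sub
      (continuous_const.mul (Phi_cont.comp ?_))
    · exact ((continuous_id.mul continuous_const).sub continuous_const).div_const _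
    · exact ((continuous_id.mul continuous_const).add continuous_const).div_const _
  -- measurability of `redErr` in `θ` for fixed `μ`
  have hmeasθ : ∀ μ : ℝ, Measurable (fun θ => redErr μ σ θ) := by
    intro μ
    unfold redErr
    refine (measurable_const.sub (measurable_const.mul (Phi_cont.measurable.comp ?_))).sub
      (measurable_const.mul (Phi_cont.measurable.comp ?_))
    · exact ((Real.continuous_sin.measurable.const_mul μ).sub
        Real.continuous_cos.measurable).div (Real.continuous_sin.measurable.const_mul σ)
    · exact ((Real.continuous_sin.measurable.const_mul μ).add
        Real.continuous_cos.measurable).div (Real.continuous_sin.measurable.const_mul σ)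
  -- the level set `{θ ∈ (0, π] : E(μ₀, θ) = γ}` is null
  set f : ℝ → ℝ := fun t => Phi ((μ₀ - t) / σ) + Phi ((μ₀ + t) / σ) with hf
  set c : ℝ := 2 * (Phi (μ₀ / σ) - γ) with hc
  have hanti := sum_strictAntiOn μ₀ σ hμ0 hσ
  have hT : {t : ℝ | f t = c}.Countable := by
    have hA : {t : ℝ | f t = c ∧ 0 ≤ t}.Subsingleton := by
      intro t1 ht1 t2 ht2
      by_contra hne
      rcases lt_or_gt_of_ne hne with h | h
      · exact absurd (ht1.1.trans ht2.1.symm).le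
          (not_le.2 (hanti ht1.2 ht2.2 h))
      · exact absurd (ht2.1.trans ht1.1.symm).le
          (not_le.2 (hanti ht2.2 ht1.2 h))
    have hsub : {t : ℝ | f t = c} ⊆
        {t : ℝ | f t = c ∧ 0 ≤ t} ∪ (fun t => -t) '' {t : ℝ | f t = c ∧ 0 ≤ t} := by
      intro t ht
      rcases le_total 0 t with h | h
      · exact Or.inl ⟨ht, h⟩
      · refine Or.inr ⟨-t, ⟨?_, by linarith⟩, by ring⟩
        have e1 : μ₀ - -t = μ₀ + t := by ring
        have e2 : μ₀ + -t = μ₀ - t := by ring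
        show Phi ((μ₀ - -t) / σ) + Phi ((μ₀ + -t) / σ) = c
        rw [e1, e2, add_comm]
        exact ht
    exact Set.Countable.mono hsub (hA.countable.union (hA.countable.image _))
  have hnull : volume {θ : ℝ | θ ∈ Set.Ioc 0 Real.pi ∧ redErr μ₀ σ θ = γ} = 0 := by
    apply Set.Countable.measure_zero
    have hbad_sub : {θ : ℝ | θ ∈ Set.Ioc 0 Real.pi ∧ redErr μ₀ σ θ = γ}
        ⊆ insert Real.pi (Set.Ioo 0 Real.pi ∩ Real.cot ⁻¹' {t : ℝ | f t = c}) := by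
      rintro θ ⟨⟨h0, hπ⟩, hE⟩
      rcases eq_or_lt_of_le hπ with rfl | hlt
      · exact Set.mem_insert _ _
      · refine Set.mem_insert_of_mem _ ⟨⟨h0, hlt⟩, ?_⟩
        have := redErr_eq_cot μ₀ σ θ hσ h0 hlt
        rw [this] at hE
        show f (Real.cot θ) = c
        simp only [hf, hc]
        linarith
    refine Set.Countable.mono hbad_sub (Set.Countable.insert _ ?_)
    exact Set.MapsTo.countable_of_injOn (f := Real.cot) (fun θ h => h.2)
      (cot_injOn.mono Set.inter_subset_left) hT
  -- dominated convergence
  have hmain : ContinuousAt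
      (fun μ => ∫ θ in (0:ℝ)..Real.pi, (if redErr μ σ θ ≤ γ then (1:ℝ) else 0)) μ₀ := by
    apply intervalIntegral.continuousAt_of_dominated_interval (bound := fun _ => (1:ℝ))
    · filter_upwards with μ
      refine (Measurable.ite ?_ measurable_const measurable_const).aestronglyMeasurable
      exact measurableSet_le (hmeasθ μ) measurable_const
    · filter_upwards with μ
      filter_upwards with t _
      split_ifs <;> simp
    · exact intervalIntegrable_const
    · have hae : ∀ᵐ t : ℝ, t ∉ {θ : ℝ | θ ∈ Set.Ioc 0 Real.pi ∧ redErr μ₀ σ θ = γ} :=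
        measure_eq_zero_iff_ae_notMem.1 hnull
      filter_upwards [hae] with t ht hmem
      rw [Set.uIoc_of_le hpi.le] at hmem
      have hne : redErr μ₀ σ t ≠ γ := fun h => ht ⟨hmem, h⟩
      rcases hne.lt_or_gt with h | h
      · have hev : ∀ᶠ μ in nhds μ₀, redErr μ σ t < γ :=
          ((hcontμ t).continuousAt).eventually_lt_const h
        exact Filter.EventuallyEq.continuousAt
          (hev.mono fun μ hμ => if_pos hμ.le)
      · have hev : ∀ᶠ μ in nhds μ₀, γ < redErr μ σ t :=
          ((hcontμ t).continuousAt).eventually_const_lt h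
        exact Filter.EventuallyEq.continuousAt
          (hev.mono fun μ hμ => if_neg (not_le.2 hμ))
  exact (continuousAt_const.mul hmain : ContinuousAt (fun μ => (1 / Real.pi) * ∫ θ in (0:ℝ)..Real.pi, (if redErr μ σ θ ≤ γ then (1:ℝ) else 0)) μ₀)
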